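/- For all integers k ≥ 74, all real r with 0 < r ≤ 2^{k-1}·ln 2, and all α ∈ (1/2, 0.9]: g_r(α) < g_r(1/2); moreover the second derivative of g_r at 1/2 is strictly negative. -/

import Mathlib

set_option maxHeartbeats 1000000

open Set


/-- The pair-correlation function `f(α) = 1 - 2^(1-k) (2 - α^k - (1-α)^k)`. -/
noncomputable def fPair (k : ℕ) (α : ℝ) : ℝ :=
  1 - (2 : ℝ) ^ (1 - (k : ℤ)) * (2 - α ^ k - (1 - α) ^ k)

/-- The entropy-correlation function
`g_r(α) = f(α)^r / (α^α (1-α)^(1-α))` (with `0^0 = 1`, as for `Real.rpow`). -/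
noncomputable def gNAE (k : ℕ) (r : ℝ) (α : ℝ) : ℝ :=
  fPair k α ^ r / (α ^ α * (1 - α) ^ (1 - α))

lemma monoAux {a b : ℝ} {C C' : ℝ → ℝ} (hd : ∀ t ∈ Icc a b, HasDerivAt C (C' t) t)
    (hpos : ∀ t ∈ Icc a b, 0 ≤ C' t) : MonotoneOn C (Icc a b) := by
  apply monotoneOn_of_deriv_nonneg (convex_Icc a b)
  · exact fun t ht => (hd t ht).continuousAt.continuousWithinAt
  · intro t ht
    rw [interior_Icc] at ht
    exact ((hd t (Ioo_subset_Icc_self ht)).differentiableAt).differentiableWithinAt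
  · intro t ht
    rw [interior_Icc] at ht
    rw [(hd t (Ioo_subset_Icc_self ht)).deriv]
    exact hpos t (Ioo_subset_Icc_self ht)

lemma auxPoly (k : ℕ) (hk : 74 ≤ k) : (k:ℝ)*((k:ℝ)-1)*(9/10)^(k-2) ≤ 11/4 := by
  induction k, hk using Nat.le_induction with
  | base => norm_num
  | succ n hn ih =>
    have hn' : (74:ℝ) ≤ n := by exact_mod_cast hn
    have h1 : n + 1 - 2 = (n - 2) + 1 := by omega
    have h2 : n - 2 + 1 = n - 1 := by omega
    have hp : (0:ℝ) ≤ (9/10:ℝ)^(n-2) := by positivity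
    have key : ((n:ℝ)+1)*((n:ℝ)+1-1)*(9/10)^(n+1-2) ≤ (n:ℝ)*((n:ℝ)-1)*(9/10)^(n-2) := by
      rw [h1, pow_succ]
      have h3 : ((n:ℝ)+1)*(9/10) ≤ (n:ℝ)-1 := by linarith
      nlinarith [mul_le_mul_of_nonneg_right h3 (by positivity : (0:ℝ) ≤ (n:ℝ)*(9/10:ℝ)^(n-2))]
    push_cast
    calc ((n:ℝ)+1)*((n:ℝ)+1-1)*(9/10)^(n+1-2) ≤ (n:ℝ)*((n:ℝ)-1)*(9/10)^(n-2) := key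
      _ ≤ 11/4 := ih

lemma pinskerAux (t : ℝ) (ht : t ∈ Icc (0:ℝ) (2/5)) :
    2*t^2 ≤ (1/2+t)*Real.log (1+2*t) + (1/2-t)*Real.log (1-2*t) := by
  -- derivatives
  have hA : ∀ s ∈ Icc (0:ℝ) (2/5), HasDerivAt
      (fun t => Real.log (1+2*t) - Real.log (1-2*t) - 4*t)
      (2/(1+2*s) + 2/(1-2*s) - 4) s := by
    intro s hs
    obtain ⟨hs0, hs1⟩ := hs
    have h1 : (0:ℝ) < 1 + 2*s := by linarith
    have h2 : (0:ℝ) < 1 - 2*s := by linarith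
    have d1 : HasDerivAt (fun t : ℝ => 1 + 2*t) 2 s := by
      simpa using ((hasDerivAt_id s).const_mul 2).const_add 1
    have d2 : HasDerivAt (fun t : ℝ => 1 - 2*t) (-2) s := by
      simpa using ((hasDerivAt_id s).const_mul 2).const_sub 1
    have l1 := d1.log h1.ne'
    have l2 := d2.log h2.ne'
    have d3 : HasDerivAt (fun t : ℝ => 4*t) 4 s := by
      simpa using (hasDerivAt_id s).const_mul 4
    refine ((l1.sub l2).sub d3).congr_deriv ?_
    field_simp
    ring
  have hApos : ∀ s ∈ Icc (0:ℝ) (2/5), 0 ≤ Real.log (1+2*s) - Real.log (1-2*s) - 4*s := by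
    intro s hs
    have key : ∀ u ∈ Icc (0:ℝ) (2/5), 0 ≤ 2/(1+2*u) + 2/(1-2*u) - 4 := by
      intro u hu
      obtain ⟨hu0, hu1⟩ := hu
      have h1 : (0:ℝ) < 1 + 2*u := by linarith
      have h2 : (0:ℝ) < 1 - 2*u := by linarith
      have : 2/(1+2*u) + 2/(1-2*u) - 4 = 16*u^2/((1+2*u)*(1-2*u)) := by
        field_simp; ring
      rw [this]; positivity
    have hm := monoAux hA key
    have := hm (left_mem_Icc.mpr (by norm_num)) hs hs.1
    simpa using this
  -- second layer
  have hD : ∀ s ∈ Icc (0:ℝ) (2/5), HasDerivAt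
      (fun t => (1/2+t)*Real.log (1+2*t) + (1/2-t)*Real.log (1-2*t) - 2*t^2)
      (Real.log (1+2*s) - Real.log (1-2*s) - 4*s) s := by
    intro s hs
    obtain ⟨hs0, hs1⟩ := hs
    have h1 : (0:ℝ) < 1 + 2*s := by linarith
    have h2 : (0:ℝ) < 1 - 2*s := by linarith
    have d1 : HasDerivAt (fun t : ℝ => 1 + 2*t) 2 s := by
      simpa using ((hasDerivAt_id s).const_mul 2).const_add 1
    have d2 : HasDerivAt (fun t : ℝ => 1 - 2*t) (-2) s := by
      simpa using ((hasDerivAt_id s).const_mul 2).const_sub 1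
    have e1 : HasDerivAt (fun t : ℝ => 1/2 + t) 1 s := by
      simpa using (hasDerivAt_id s).const_add (1/2:ℝ)
    have e2 : HasDerivAt (fun t : ℝ => 1/2 - t) (-1) s := by
      simpa using (hasDerivAt_id s).const_sub (1/2:ℝ)
    have l1 := d1.log h1.ne'
    have l2 := d2.log h2.ne'
    have sq : HasDerivAt (fun t : ℝ => 2*t^2) (2*(2*s)) s := by
      simpa using (hasDerivAt_pow 2 s).const_mul 2
    refine (((e1.mul l1).add (e2.mul l2)).sub sq).congr_deriv ?_
    field_simp
    ring
  have hm := monoAux hD hApos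
  have h0 : (0:ℝ) ∈ Icc (0:ℝ) (2/5) := left_mem_Icc.mpr (by norm_num)
  have := hm h0 ht ht.1
  simp at this
  linarith

lemma dplus (n : ℕ) (s : ℝ) :
    HasDerivAt (fun t : ℝ => (1/2+t)^n) ((n:ℝ)*(1/2+s)^(n-1)) s := by
  have h := (hasDerivAt_pow n ((1:ℝ)/2+s)).comp s ((hasDerivAt_id s).const_add (1/2:ℝ))
  simpa [Function.comp_def] using h

lemma dminus (n : ℕ) (s : ℝ) :
    HasDerivAt (fun t : ℝ => (1/2-t)^n) (-((n:ℝ)*(1/2-s)^(n-1))) s := by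
  have h := (hasDerivAt_pow n ((1:ℝ)/2-s)).comp s ((hasDerivAt_id s).const_sub (1/2:ℝ))
  simpa [Function.comp_def] using h

lemma psiNonneg (k : ℕ) (hk : 74 ≤ k) (t : ℝ) (ht : t ∈ Icc (0:ℝ) (2/5)) :
    2*(1/2:ℝ)^k ≤ (1/2+t)^k + (1/2-t)^k := by
  have hd : ∀ s ∈ Icc (0:ℝ) (2/5), HasDerivAt (fun t : ℝ => (1/2+t)^k + (1/2-t)^k)
      ((k:ℝ)*(1/2+s)^(k-1) - (k:ℝ)*(1/2-s)^(k-1)) s := by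
    intro s _
    have := (dplus k s).add (dminus k s)
    exact this.congr_deriv (by ring)
  have hpos : ∀ s ∈ Icc (0:ℝ) (2/5), 0 ≤ (k:ℝ)*(1/2+s)^(k-1) - (k:ℝ)*(1/2-s)^(k-1) := by
    intro s hs
    obtain ⟨h0, h1⟩ := hs
    have hb : (1/2-s:ℝ) ≤ 1/2+s := by linarith
    have hb0 : (0:ℝ) ≤ 1/2-s := by linarith
    have := pow_le_pow_left₀ hb0 hb (k-1)
    have hk0 : (0:ℝ) ≤ (k:ℝ) := by positivity
    nlinarith
  have hm := monoAux hd hpos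
  have := hm (left_mem_Icc.mpr (by norm_num)) ht ht.1
  simpa [two_mul] using this

lemma psiBound (k : ℕ) (hk : 74 ≤ k) (t : ℝ) (ht : t ∈ Icc (0:ℝ) (2/5)) :
    (1/2+t)^k + (1/2-t)^k - 2*(1/2:ℝ)^k ≤ ((k:ℝ)*((k:ℝ)-1)*(9/10)^(k-2))*t^2 := by
  set M := (k:ℝ)*((k:ℝ)-1)*(9/10)^(k-2) with hM
  have e1 : k - 1 - 1 = k - 2 := by omega
  have e2 : ((k-1:ℕ):ℝ) = (k:ℝ)-1 := by
    have : 1 ≤ k := by omega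
    push_cast [this]; ring
  -- C' := 2*M*t - (k*(1/2+t)^(k-1) - k*(1/2-t)^(k-1)) is nonneg on [0,2/5]
  have hC'd : ∀ s ∈ Icc (0:ℝ) (2/5), HasDerivAt
      (fun t : ℝ => 2*M*t - ((k:ℝ)*(1/2+t)^(k-1) - (k:ℝ)*(1/2-t)^(k-1)))
      (2*M - ((k:ℝ)*(((k:ℝ)-1)*(1/2+s)^(k-2)) + (k:ℝ)*(((k:ℝ)-1)*(1/2-s)^(k-2)))) s := by
    intro s _
    have d1 := ((dplus (k-1) s).const_mul (k:ℝ))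
    have d2 := ((dminus (k-1) s).const_mul (k:ℝ))
    have dl : HasDerivAt (fun t : ℝ => 2*M*t) (2*M) s := by
      simpa using (hasDerivAt_id s).const_mul (2*M)
    have := dl.sub (d1.sub d2)
    rw [e1] at this
    refine this.congr_deriv ?_
    rw [e2]; ring
  have hC'pos : ∀ s ∈ Icc (0:ℝ) (2/5),
      0 ≤ 2*M - ((k:ℝ)*(((k:ℝ)-1)*(1/2+s)^(k-2)) + (k:ℝ)*(((k:ℝ)-1)*(1/2-s)^(k-2))) := by
    intro s hs
    obtain ⟨h0, h1⟩ := hs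
    have hp1 : (1/2+s:ℝ)^(k-2) ≤ (9/10)^(k-2) :=
      pow_le_pow_left₀ (by linarith) (by linarith) _
    have hp2 : (1/2-s:ℝ)^(k-2) ≤ (9/10)^(k-2) :=
      pow_le_pow_left₀ (by linarith) (by linarith) _
    have hk1 : (1:ℝ) ≤ (k:ℝ) := by
      have : (74:ℝ) ≤ (k:ℝ) := by exact_mod_cast hk
      linarith
    have hkk : (0:ℝ) ≤ (k:ℝ)*((k:ℝ)-1) := by nlinarith
    rw [hM]
    nlinarith [mul_le_mul_of_nonneg_left hp1 hkk, mul_le_mul_of_nonneg_left hp2 hkk]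
  have hC'nonneg : ∀ s ∈ Icc (0:ℝ) (2/5),
      0 ≤ 2*M*s - ((k:ℝ)*(1/2+s)^(k-1) - (k:ℝ)*(1/2-s)^(k-1)) := by
    intro s hs
    have hm := monoAux hC'd hC'pos
    have := hm (left_mem_Icc.mpr (by norm_num)) hs hs.1
    simpa using this
  -- C := M*t^2 - ((1/2+t)^k + (1/2-t)^k) monotone
  have hCd : ∀ s ∈ Icc (0:ℝ) (2/5), HasDerivAt
      (fun t : ℝ => M*t^2 - ((1/2+t)^k + (1/2-t)^k))
      (2*M*s - ((k:ℝ)*(1/2+s)^(k-1) - (k:ℝ)*(1/2-s)^(k-1))) s := by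
    intro s _
    have sq : HasDerivAt (fun t : ℝ => M*t^2) (M*(2*s)) s := by
      simpa using (hasDerivAt_pow 2 s).const_mul M
    have := sq.sub ((dplus k s).add (dminus k s))
    refine this.congr_deriv ?_; ring
  have hm := monoAux hCd hC'nonneg
  have := hm (left_mem_Icc.mpr (by norm_num)) ht ht.1
  simp only [] at this
  have h0 : M*(0:ℝ)^2 - ((1/2+0:ℝ)^k + (1/2-0:ℝ)^k) = -(2*(1/2:ℝ)^k) := by
    norm_num; ring
  rw [h0] at this
  linarith

lemma c_eq (k : ℕ) : (2:ℝ)^(1-(k:ℤ)) = 2/2^k := by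
  rw [zpow_sub₀ (two_ne_zero), zpow_one, zpow_natCast]

lemma c_small (k : ℕ) (hk : 74 ≤ k) : (2:ℝ)^(1-(k:ℤ)) ≤ 1/400 := by
  rw [c_eq]
  have h : (800:ℝ) ≤ 2^k := by
    calc (800:ℝ) ≤ 2^10 := by norm_num
      _ ≤ 2^k := pow_le_pow_right₀ one_le_two (by omega)
  rw [div_le_div_iff₀ (by positivity) (by norm_num)]
  linarith

lemma fPair_ge (k : ℕ) (hk : 74 ≤ k) {α : ℝ} (h0 : 0 ≤ α) (h1 : α ≤ 1) :
    99/100 ≤ fPair k α := by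
  have hc := c_small k hk
  have hc0 : (0:ℝ) < (2:ℝ)^(1-(k:ℤ)) := by positivity
  have ha : (0:ℝ) ≤ α^k := by positivity
  have hb : (0:ℝ) ≤ (1-α)^k := by
    apply pow_nonneg; linarith
  have h2 : 2 - α^k - (1-α)^k ≤ 2 := by linarith
  have : (2:ℝ)^(1-(k:ℤ)) * (2 - α^k - (1-α)^k) ≤ (2:ℝ)^(1-(k:ℤ)) * 2 := by
    rcases le_or_gt (2 - α^k - (1-α)^k) 0 with h | h
    · nlinarith
    · exact mul_le_mul_of_nonneg_left h2 hc0.le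
  unfold fPair
  nlinarith
lemma gNAE_exp (k : ℕ) (r α : ℝ) (h0 : 0 < α) (h1 : α < 1) (hf : 0 < fPair k α) :
    gNAE k r α =
      Real.exp (r * Real.log (fPair k α) - (Real.log α * α + Real.log (1-α) * (1-α))) := by
  rw [gNAE, Real.rpow_def_of_pos hf, Real.rpow_def_of_pos h0,
    Real.rpow_def_of_pos (by linarith : (0:ℝ) < 1-α), ← Real.exp_add, ← Real.exp_sub]
  ring_nf

/-- **Lemma 5 (Achlioptas–Moore).** For all `k ≥ 74`, `0 < r ≤ 2^(k-1) ln 2`,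
and `α ∈ (1/2, 0.9]`: `g_r(α) < g_r(1/2)`; moreover `g_r''(1/2) < 0`. -/
theorem gNAE_near_half (k : ℕ) (hk : 74 ≤ k) (r : ℝ) (hr0 : 0 < r)
    (hr : r ≤ 2 ^ (k - 1) * Real.log 2) :
    (∀ α ∈ Set.Ioc (1 / 2 : ℝ) 0.9, gNAE k r α < gNAE k r (1 / 2)) ∧
    deriv (deriv (gNAE k r)) (1 / 2) < 0 := by
  constructor
  · intro α hα
    obtain ⟨hα1, hα2⟩ := hα
    have hα2' : α ≤ 9/10 := by norm_num at hα2; linarith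
    set t : ℝ := α - 1/2 with htdef
    clear_value t
    have ht : t ∈ Icc (0:ℝ) (2/5) := ⟨by rw [htdef]; linarith, by rw [htdef]; linarith⟩
    have ht0 : 0 < t := by rw [htdef]; linarith
    have h0 : (0:ℝ) < α := by linarith
    have h1 : α < 1 := by linarith
    have hfhalf : (99/100:ℝ) ≤ fPair k (1/2) := fPair_ge k hk (by norm_num) (by norm_num)
    have hfα : (99/100:ℝ) ≤ fPair k α := fPair_ge k hk h0.le h1.le
    have hfhalf0 : (0:ℝ) < fPair k (1/2) := by linarith
    have hfα0 : (0:ℝ) < fPair k α := by linarith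
    rw [gNAE_exp k r α h0 h1 hfα0, gNAE_exp k r (1/2) (by norm_num) (by norm_num) hfhalf0,
      Real.exp_lt_exp]
    -- rewrite ψ facts in terms of α
    have e1 : (1/2 + t : ℝ) = α := by rw [htdef]; ring
    have e2 : (1/2 - t : ℝ) = 1 - α := by rw [htdef]; ring
    have hψb := psiBound k hk t ht
    have hψ0 := psiNonneg k hk t ht
    rw [e1, e2] at hψb hψ0
    have hM := auxPoly k hk
    have ht2 : (0:ℝ) < t^2 := by positivity
    have hψb' : α^k + (1-α)^k - 2*(1/2:ℝ)^k ≤ (11/4)*t^2 := by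
      calc α^k + (1-α)^k - 2*(1/2:ℝ)^k ≤ ((k:ℝ)*((k:ℝ)-1)*(9/10)^(k-2))*t^2 := hψb
        _ ≤ (11/4)*t^2 := by nlinarith
    -- log difference bound
    have hlog : Real.log (fPair k α) - Real.log (fPair k (1/2))
        ≤ (fPair k α - fPair k (1/2)) / fPair k (1/2) := by
      have hq : (0:ℝ) < fPair k α / fPair k (1/2) := by positivity
      have := Real.log_le_sub_one_of_pos hq
      rw [Real.log_div hfα0.ne' hfhalf0.ne'] at this
      have : Real.log (fPair k α) - Real.log (fPair k (1/2)) ≤ fPair k α / fPair k (1/2) - 1 :=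
        this
      calc Real.log (fPair k α) - Real.log (fPair k (1/2))
          ≤ fPair k α / fPair k (1/2) - 1 := this
        _ = (fPair k α - fPair k (1/2)) / fPair k (1/2) := by field_simp
    -- difference of f
    have hdiff : fPair k α - fPair k (1/2)
        = (2:ℝ)^(1-(k:ℤ)) * (α^k + (1-α)^k - 2*(1/2)^k) := by
      unfold fPair
      have : ((1:ℝ) - 1/2) = 1/2 := by norm_num
      rw [this]; ring
    have hc0 : (0:ℝ) < (2:ℝ)^(1-(k:ℤ)) := by positivity
    -- bound r * (log fα - log fhalf)
    have hlog2 : Real.log 2 < 0.6931471808 := Real.log_two_lt_d9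
    have hlog2' : (0:ℝ) < Real.log 2 := Real.log_pos (by norm_num)
    have hpow : (2:ℝ)^(k-1) * (2:ℝ)^(1-(k:ℤ)) = 1 := by
      rw [c_eq]
      have : (2:ℝ)^(k-1) * 2 = 2^k := by
        rw [← pow_succ]
        congr 1
        omega
      field_simp
      linarith [this]
    have key : r * (Real.log (fPair k α) - Real.log (fPair k (1/2))) < 2*t^2 := by
      have s1 : r * (Real.log (fPair k α) - Real.log (fPair k (1/2)))
          ≤ r * ((fPair k α - fPair k (1/2)) / fPair k (1/2)) :=
        mul_le_mul_of_nonneg_left hlog hr0.le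
      have hnum : (0:ℝ) ≤ α^k + (1-α)^k - 2*(1/2)^k := by linarith
      have hdd : (0:ℝ) ≤ (fPair k α - fPair k (1/2)) / fPair k (1/2) := by
        rw [hdiff]
        apply div_nonneg (mul_nonneg hc0.le hnum) hfhalf0.le
      have s2 : r * ((fPair k α - fPair k (1/2)) / fPair k (1/2))
          ≤ (2^(k-1) * Real.log 2) * ((fPair k α - fPair k (1/2)) / fPair k (1/2)) :=
        mul_le_mul_of_nonneg_right hr hdd
      have s3 : (2^(k-1) * Real.log 2) * ((fPair k α - fPair k (1/2)) / fPair k (1/2))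
          = Real.log 2 * ((α^k + (1-α)^k - 2*(1/2)^k) / fPair k (1/2)) := by
        rw [hdiff]
        rw [show (2:ℝ)^(k-1) * Real.log 2 * ((2:ℝ)^(1-(k:ℤ)) * (α^k + (1-α)^k - 2*(1/2)^k) / fPair k (1/2))
          = ((2:ℝ)^(k-1) * (2:ℝ)^(1-(k:ℤ))) * (Real.log 2 * ((α^k + (1-α)^k - 2*(1/2)^k) / fPair k (1/2))) by ring,
          hpow, one_mul]
      have s4 : Real.log 2 * ((α^k + (1-α)^k - 2*(1/2)^k) / fPair k (1/2))
          ≤ Real.log 2 * (((11/4)*t^2) / (99/100)) := by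
        exact mul_le_mul_of_nonneg_left
          (div_le_div₀ (by positivity) hψb' (by norm_num) hfhalf) hlog2'.le
      have s5 : Real.log 2 * (((11/4)*t^2) / (99/100)) < 2*t^2 := by
        rw [show Real.log 2 * (((11/4)*t^2) / (99/100)) = (Real.log 2 * (25/9)) * t^2 by ring]
        have h26 : Real.log 2 * (25/9) < 2 := by
          have := mul_lt_mul_of_pos_right hlog2 (show (0:ℝ) < 25/9 by norm_num)
          nlinarith [this]
        exact mul_lt_mul_of_pos_right h26 ht2
      linarith
    -- entropy identities
    have h2t1 : (0:ℝ) < 1 + 2*t := by linarith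
    have h2t2 : (0:ℝ) < 1 - 2*t := by
      have := ht.2; linarith
    have hlα : Real.log α = Real.log (1+2*t) - Real.log 2 := by
      rw [show α = (1+2*t)/2 by rw [htdef]; ring, Real.log_div h2t1.ne' two_ne_zero]
    have hlβ : Real.log (1-α) = Real.log (1-2*t) - Real.log 2 := by
      rw [show 1-α = (1-2*t)/2 by rw [htdef]; ring, Real.log_div h2t2.ne' two_ne_zero]
    have hlhalf : Real.log (1/2:ℝ) = -Real.log 2 := by
      rw [one_div, Real.log_inv]
    have pinsk := pinskerAux t ht
    rw [e1, e2] at pinsk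
    rw [show (1:ℝ) - 1/2 = 1/2 by norm_num, hlα, hlβ, hlhalf]
    linarith [key, pinsk]
  ·
    have hk2 : (2:ℕ) ≤ k := by omega
    set c : ℝ := (2:ℝ)^(1-(k:ℤ)) with hcdef
    have hc0 : 0 < c := by rw [hcdef]; positivity
    clear_value c
    -- derivative of x ↦ x^n and (1-x)^n
    have dpow : ∀ (n : ℕ) (x : ℝ), HasDerivAt (fun y : ℝ => y^n) ((n:ℝ)*x^(n-1)) x :=
      fun n x => hasDerivAt_pow n x
    have dpow' : ∀ (n : ℕ) (x : ℝ), HasDerivAt (fun y : ℝ => (1-y)^n) (-((n:ℝ)*(1-x)^(n-1))) x := by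
      intro n x
      have h := (hasDerivAt_pow n (1-x)).comp x ((hasDerivAt_id x).const_sub 1)
      simpa [Function.comp_def] using h
    -- derivative of fPair
    have hfd : ∀ x : ℝ, HasDerivAt (fPair k) (c * ((k:ℝ)*x^(k-1) - (k:ℝ)*(1-x)^(k-1))) x := by
      intro x
      have h1 : HasDerivAt (fun y : ℝ => 2 - y^k - (1-y)^k)
          (-((k:ℝ)*x^(k-1)) - -((k:ℝ)*(1-x)^(k-1))) x :=
        (((dpow k x).const_sub 2).sub (dpow' k x))
      have h2 := (h1.const_mul c).const_sub 1
      have : fPair k = fun y : ℝ => 1 - c * (2 - y^k - (1-y)^k) := by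
        funext y; rw [fPair, hcdef]
      rw [this]
      refine h2.congr_deriv ?_
      ring
    -- positivity of fPair on [0,1]
    have hfpos : ∀ x ∈ Icc (0:ℝ) 1, 0 < fPair k x := by
      intro x hx
      have := fPair_ge k hk hx.1 hx.2
      linarith
    -- L and its derivative
    set L : ℝ → ℝ := fun x => r * Real.log (fPair k x) - (Real.log x * x + Real.log (1-x) * (1-x))
      with hLdef
    set F' : ℝ → ℝ := fun x => c * ((k:ℝ)*x^(k-1) - (k:ℝ)*(1-x)^(k-1)) with hF'def
    set L' : ℝ → ℝ := fun x => r * (F' x / fPair k x) + (Real.log (1-x) - Real.log x) with hL'def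
    have hLd : ∀ x ∈ Ioo (0:ℝ) 1, HasDerivAt L (L' x) x := by
      intro x hx
      obtain ⟨hx0, hx1⟩ := hx
      have hx1' : (0:ℝ) < 1 - x := by linarith
      have hfx : 0 < fPair k x := hfpos x ⟨hx0.le, hx1.le⟩
      have hlogf : HasDerivAt (fun y => Real.log (fPair k y)) (F' x / fPair k x) x := by
        have := (hfd x).log hfx.ne'
        simpa [hF'def] using this
      have hxlogx : HasDerivAt (fun y : ℝ => Real.log y * y) (Real.log x + 1) x := by
        have := (Real.hasDerivAt_log hx0.ne').mul (hasDerivAt_id x)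
        refine this.congr_deriv ?_
        simp only [id_eq]
        field_simp
        ring
      have hylogy : HasDerivAt (fun y : ℝ => Real.log (1-y) * (1-y)) (-(Real.log (1-x) + 1)) x := by
        have inner : HasDerivAt (fun y : ℝ => 1 - y) (-1) x := (hasDerivAt_id x).const_sub 1
        have hl : HasDerivAt (fun y : ℝ => Real.log (1-y)) (-1/(1-x)) x := by
          have := inner.log hx1'.ne'
          simpa using this
        have := hl.mul inner
        refine this.congr_deriv ?_
        field_simp
        ring
      have := ((hlogf.const_mul r).sub (hxlogx.add hylogy))
      rw [hLdef, hL'def]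
      refine this.congr_deriv ?_
      ring
    -- gNAE agrees with exp ∘ L near 1/2
    have hmem : Ioo (0:ℝ) 1 ∈ nhds (1/2:ℝ) := Ioo_mem_nhds (by norm_num) (by norm_num)
    have hgL : ∀ x ∈ Ioo (0:ℝ) 1, gNAE k r x = Real.exp (L x) := by
      intro x hx
      exact gNAE_exp k r x hx.1 hx.2 (hfpos x ⟨hx.1.le, hx.2.le⟩)
    have hEq : gNAE k r =ᶠ[nhds (1/2:ℝ)] fun x => Real.exp (L x) :=
      Filter.eventuallyEq_of_mem hmem hgL
    have hD1 : deriv (fun y => Real.exp (L y)) =ᶠ[nhds (1/2:ℝ)]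
        fun x => Real.exp (L x) * L' x :=
      Filter.eventuallyEq_of_mem hmem (fun x hx => ((hLd x hx).exp).deriv)
    have step : deriv (deriv (gNAE k r)) (1/2)
        = deriv (fun x => Real.exp (L x) * L' x) (1/2) :=
      (hEq.deriv.trans hD1).deriv_eq
    -- derivative of F' at 1/2
    have e11 : k - 1 - 1 = k - 2 := by omega
    have ekr : ((k-1:ℕ):ℝ) = (k:ℝ)-1 := by
      rw [Nat.cast_sub (by omega : 1 ≤ k), Nat.cast_one]
    set Fv : ℝ := c * ((k:ℝ)*(1/2:ℝ)^(k-1) - (k:ℝ)*(1-(1/2:ℝ))^(k-1)) with hFvdef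
    set Fv2 : ℝ := c * (2*((k:ℝ)*(((k:ℝ)-1)*(1/2:ℝ)^(k-2)))) with hFv2def
    have hF'd : HasDerivAt F' Fv2 (1/2:ℝ) := by
      have d1 := (dpow (k-1) (1/2:ℝ)).const_mul (k:ℝ)
      have d2 := (dpow' (k-1) (1/2:ℝ)).const_mul (k:ℝ)
      have h3 := ((d1.sub d2).const_mul c)
      rw [e11] at h3
      rw [hF'def, hFv2def]
      refine h3.congr_deriv ?_
      rw [ekr, show (1:ℝ)-1/2 = 1/2 from by norm_num]
      ring
    have hfhalf : 0 < fPair k (1/2:ℝ) := hfpos _ ⟨by norm_num, by norm_num⟩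
    have hFq : HasDerivAt (fun x => F' x / fPair k x)
        ((Fv2 * fPair k (1/2:ℝ) - F' (1/2:ℝ) * Fv) / (fPair k (1/2:ℝ))^2) (1/2:ℝ) :=
      hF'd.div (hfd (1/2:ℝ)) hfhalf.ne'
    have hlog1 : HasDerivAt (fun x : ℝ => Real.log (1-x)) (-1/(1-(1/2:ℝ))) (1/2:ℝ) := by
      have inner : HasDerivAt (fun y : ℝ => 1 - y) (-1) (1/2:ℝ) := (hasDerivAt_id _).const_sub 1
      have := inner.log (by norm_num : (1:ℝ)-1/2 ≠ 0)
      simpa using this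
    have hlog2 : HasDerivAt Real.log ((1/2:ℝ)⁻¹) (1/2:ℝ) :=
      Real.hasDerivAt_log (by norm_num)
    set D2 : ℝ := r * ((Fv2 * fPair k (1/2:ℝ) - F' (1/2:ℝ) * Fv) / (fPair k (1/2:ℝ))^2)
        + (-1/(1-(1/2:ℝ)) - (1/2:ℝ)⁻¹) with hD2def
    have hL'd : HasDerivAt L' D2 (1/2:ℝ) := by
      rw [hL'def, hD2def]
      exact (hFq.const_mul r).add (hlog1.sub hlog2)
    have hprod : HasDerivAt (fun x => Real.exp (L x) * L' x)
        (Real.exp (L (1/2:ℝ)) * L' (1/2:ℝ) * L' (1/2:ℝ) + Real.exp (L (1/2:ℝ)) * D2) (1/2:ℝ) :=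
      ((hLd _ (by norm_num)).exp).mul hL'd
    rw [step, hprod.deriv]
    -- F'(1/2) = 0 and L'(1/2) = 0
    have hF0 : F' (1/2:ℝ) = 0 := by
      simp only [hF'def]
      norm_num
    have hL'0 : L' (1/2:ℝ) = 0 := by
      simp only [hL'def, hF0]
      norm_num
    rw [hL'0]
    -- now bound D2' := r * ((Fv2 * f - 0*Fv)/f^2) - 4
    have hpow : (2:ℝ)^(k-1) * c = 1 := by
      rw [hcdef, c_eq]
      have h2k : (2:ℝ)^(k-1) * 2 = 2^k := by
        rw [← pow_succ]; congr 1; omega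
      field_simp
      linarith [h2k]
    have hFv2nn : 0 ≤ Fv2 := by
      rw [hFv2def]
      have hk1 : (1:ℝ) ≤ (k:ℝ) := by exact_mod_cast (by omega : 1 ≤ k)
      have : (0:ℝ) ≤ ((k:ℝ)-1) := by linarith
      positivity
    have hple : (1/2:ℝ)^(k-2) ≤ (9/10:ℝ)^(k-2) :=
      pow_le_pow_left₀ (by norm_num) (by norm_num) _
    have hkk : (0:ℝ) ≤ (k:ℝ)*((k:ℝ)-1) := by
      have hk1 : (1:ℝ) ≤ (k:ℝ) := by exact_mod_cast (by omega : 1 ≤ k)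
      nlinarith
    have h4 : (k:ℝ)*((k:ℝ)-1)*(1/2:ℝ)^(k-2) ≤ 11/4 := by
      have := auxPoly k hk
      nlinarith [mul_le_mul_of_nonneg_left hple hkk]
    have hlog2lt : Real.log 2 < 0.6931471808 := Real.log_two_lt_d9
    have hlog2pos : (0:ℝ) < Real.log 2 := Real.log_pos (by norm_num)
    have hrF : r * Fv2 ≤ 382/100 := by
      have s1 : r * Fv2 ≤ (2^(k-1) * Real.log 2) * Fv2 := mul_le_mul_of_nonneg_right hr hFv2nn
      have s2 : (2^(k-1) * Real.log 2) * Fv2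
          = 2 * Real.log 2 * ((k:ℝ)*((k:ℝ)-1)*(1/2:ℝ)^(k-2)) := by
        rw [hFv2def]
        rw [show (2:ℝ)^(k-1) * Real.log 2 * (c * (2*((k:ℝ)*(((k:ℝ)-1)*(1/2:ℝ)^(k-2)))))
          = ((2:ℝ)^(k-1) * c) * (2 * Real.log 2 * ((k:ℝ)*((k:ℝ)-1)*(1/2:ℝ)^(k-2))) from by ring,
          hpow, one_mul]
      have s3 : 2 * Real.log 2 * ((k:ℝ)*((k:ℝ)-1)*(1/2:ℝ)^(k-2)) ≤ 2 * Real.log 2 * (11/4) :=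
        mul_le_mul_of_nonneg_left h4 (by positivity)
      nlinarith [s1, s2, s3, hlog2lt, hlog2pos]
    have hfub : fPair k (1/2:ℝ) ≥ 99/100 := fPair_ge k hk (by norm_num) (by norm_num)
    have hD2neg : r * ((Fv2 * fPair k (1/2:ℝ) - 0 * Fv) / (fPair k (1/2:ℝ))^2)
        + (-1/(1-(1/2:ℝ)) - (1/2:ℝ)⁻¹) < 0 := by
      have heq : r * ((Fv2 * fPair k (1/2:ℝ) - 0 * Fv) / (fPair k (1/2:ℝ))^2)
          = (r * Fv2) / fPair k (1/2:ℝ) := by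
        field_simp
        ring
      rw [heq]
      have hnum : (0:ℝ) ≤ r * Fv2 := mul_nonneg hr0.le hFv2nn
      have : (r * Fv2) / fPair k (1/2:ℝ) ≤ (382/100) / (99/100) :=
        div_le_div₀ (by norm_num) hrF (by norm_num) hfub
      have hval : ((382:ℝ)/100) / (99/100) < 4 := by norm_num
      have hfrac : -1/(1-(1/2:ℝ)) - (1/2:ℝ)⁻¹ = -4 := by norm_num
      rw [hfrac]
      linarith
    calc Real.exp (L (1/2:ℝ)) * 0 * 0 + Real.exp (L (1/2:ℝ)) * D2
        = Real.exp (L (1/2:ℝ)) * D2 := by ring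
      _ < 0 := by
          apply mul_neg_of_pos_of_neg (Real.exp_pos _)
          rw [hD2def, hF0]
          exact hD2neg
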